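/- Let R be a commutative Bézout domain of stable range 1.5, m ∈ R neither zero nor a unit, and R_m = R/mR. Let n ≥ 2 and Φ = diag(φ₁, …, φ_n) over R_m with φ₁ ∣ φ₂ ∣ ⋯ ∣ φ_n and φ_n ≠ 0. Let H be an invertible n×n matrix over R_m such that for every pair i > j the (i, j) entry of H is divisible by some generating solution ψ_{ij} of the equation φ_i = φ_j·x in R_m. Then H belongs to the Zelisko group G_Φ, i.e., there exists an invertible matrix S over R_m with H·Φ = Φ·S. -/

import Mathlib

/-- A commutative ring has stable range 1.5. -/
def HasStableRange15 (R : Type*) [CommRing R] : Prop :=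
  ∀ a b c : R, c ≠ 0 → (∀ d : R, d ∣ a → d ∣ b → d ∣ c → IsUnit d) →
    ∃ r : R, ∀ d : R, d ∣ a + b * r → d ∣ c → IsUnit d

section ZeliskoAux

set_option linter.unusedSectionVars false

variable {R : Type*} [CommRing R] [IsDomain R] [IsBezout R]

lemma ZeliskoAux.isUnit_mk_of_coprime (m x : R)
    (h : ∀ d : R, d ∣ x → d ∣ m → IsUnit d) :
    IsUnit (Ideal.Quotient.mk (Ideal.span {m}) x) := by
  obtain ⟨a, b, hab⟩ := IsBezout.gcd_eq_sum x m
  have hg : IsUnit (IsBezout.gcd x m) :=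
    h _ (IsBezout.gcd_dvd_left x m) (IsBezout.gcd_dvd_right x m)
  obtain ⟨c, hc⟩ := hg.exists_right_inv
  refine IsUnit.of_mul_eq_one (Ideal.Quotient.mk _ (a * c)) ?_
  rw [← map_mul, ← map_one (Ideal.Quotient.mk (Ideal.span {m})), Ideal.Quotient.eq,
    Ideal.mem_span_singleton]
  exact ⟨-(b * c), by linear_combination c * hab + hc⟩

lemma ZeliskoAux.quot_sr1 (hsr : HasStableRange15 R) (m : R) (hm0 : m ≠ 0)
    (t z : R ⧸ Ideal.span {m}) (h : ∃ s, t * s + z = 1) :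
    ∃ r, IsUnit (t + z * r) := by
  obtain ⟨s, hs⟩ := h
  obtain ⟨t', rfl⟩ := Ideal.Quotient.mk_surjective t
  obtain ⟨z', rfl⟩ := Ideal.Quotient.mk_surjective z
  obtain ⟨s', rfl⟩ := Ideal.Quotient.mk_surjective s
  have hmem : t' * s' + z' - 1 ∈ Ideal.span ({m} : Set R) := by
    rw [← Ideal.Quotient.eq]
    simpa using hs
  obtain ⟨k, hk⟩ := Ideal.mem_span_singleton'.mp hmem
  obtain ⟨r, hr⟩ := hsr t' z' m hm0 (fun d hdt hdz hdm => by
    refine isUnit_of_dvd_one ?_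
    have : (1 : R) = t' * s' + z' - k * m := by linear_combination hk
    rw [this]
    exact dvd_sub (dvd_add (hdt.mul_right _) hdz) (hdm.mul_left _))
  exact ⟨Ideal.Quotient.mk _ r, by
    rw [← map_mul, ← map_add]
    exact ZeliskoAux.isUnit_mk_of_coprime m _ hr⟩

lemma ZeliskoAux.exists_unit_mul (hsr : HasStableRange15 R) (m : R) (hm0 : m ≠ 0)
    (a b : R ⧸ Ideal.span {m}) (h1 : a ∣ b) (h2 : b ∣ a) :
    ∃ u : (R ⧸ Ideal.span {m})ˣ, b = u * a := by
  obtain ⟨t, ht⟩ := h1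
  obtain ⟨s, hs⟩ := h2
  obtain ⟨r, hu⟩ := ZeliskoAux.quot_sr1 hsr m hm0 t (1 - t * s) ⟨s, by ring⟩
  have hz : a * (1 - t * s) = 0 := by linear_combination hs + s * ht
  refine ⟨hu.unit, ?_⟩
  have : (hu.unit : R ⧸ Ideal.span {m}) = t + (1 - t * s) * r := hu.unit_spec
  rw [this]
  linear_combination ht - r * hz

end ZeliskoAux

/-- If `H` is an invertible matrix over `R/mR` whose `(i, j)` entry for each `i > j` is
divisible by some generating solution of `φ_i = φ_j * x` (where `φ₁ ∣ ⋯ ∣ φ_n ≠ 0`),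
then `H` belongs to the Zelisko group of `Φ = diag(φ₁, …, φ_n)`. -/
theorem mem_zelisko_of_entries_divisible
    {R : Type*} [CommRing R] [IsDomain R] [IsBezout R]
    (hsr : HasStableRange15 R)
    (m : R) (hm0 : m ≠ 0) (hmu : ¬ IsUnit m)
    (n : ℕ) (hn : 2 ≤ n)
    (φ : Fin n → R ⧸ Ideal.span {m})
    (hchain : ∀ i : Fin n, ∀ h : (i : ℕ) + 1 < n, φ i ∣ φ ⟨(i : ℕ) + 1, h⟩)
    (hφn : φ ⟨n - 1, by omega⟩ ≠ 0)
    (H : Matrix (Fin n) (Fin n) (R ⧸ Ideal.span {m})) (hH : IsUnit H)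
    (hdiv : ∀ i j : Fin n, j < i →
      ∃ ψ : R ⧸ Ideal.span {m},
        φ i = φ j * ψ ∧
        (∀ x : R ⧸ Ideal.span {m}, φ i = φ j * x → ψ ∣ x) ∧
        ψ ∣ H i j) :
    ∃ S : Matrix (Fin n) (Fin n) (R ⧸ Ideal.span {m}),
      IsUnit S ∧ H * Matrix.diagonal φ = Matrix.diagonal φ * S := by
  classical
  set π : R →+* R ⧸ Ideal.span {m} := Ideal.Quotient.mk (Ideal.span {m}) with hπ
  have hπs : Function.Surjective π := Ideal.Quotient.mk_surjective
  -- lifts of φ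
  choose g hg using fun i => hπs (φ i)
  -- divisors of m representing φ up to units
  set f : Fin n → R := fun i => IsBezout.gcd (g i) m with hf
  have hfg : ∀ i, f i ∣ g i := fun i => IsBezout.gcd_dvd_left _ _
  have hfm : ∀ i, f i ∣ m := fun i => IsBezout.gcd_dvd_right _ _
  have hf0 : ∀ i, f i ≠ 0 := by
    intro i h
    exact hm0 (zero_dvd_iff.mp (h ▸ hfm i))
  have hπfd : ∀ i, π (f i) ∣ φ i := fun i => (hg i) ▸ map_dvd π (hfg i)
  have hφd : ∀ i, φ i ∣ π (f i) := by
    intro i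
    obtain ⟨a, b, hab⟩ := IsBezout.gcd_eq_sum (g i) m
    refine ⟨π a, ?_⟩
    have h1 : π (f i) = π (a * g i + b * m) := by rw [hab]
    have hm' : π m = 0 := by
      rw [hπ, Ideal.Quotient.eq_zero_iff_mem]
      exact Ideal.mem_span_singleton_self m
    rw [h1, map_add, map_mul, map_mul, hg i, hm', mul_zero, add_zero, mul_comm]
  -- associated units
  choose w hw using fun i =>
    ZeliskoAux.exists_unit_mul hsr m hm0 (π (f i)) (φ i) (hπfd i) (hφd i)
  -- divisibility chains
  have hφchain : ∀ a b : Fin n, a ≤ b → φ a ∣ φ b := by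
    intro a b hab
    obtain ⟨a, ha⟩ := a
    obtain ⟨b, hb⟩ := b
    rw [Fin.mk_le_mk] at hab
    induction b, hab using Nat.le_induction with
    | base => exact dvd_rfl
    | succ b hab ih =>
      exact (ih (by omega)).trans (hchain ⟨b, by omega⟩ hb)
  have hfchain : ∀ a b : Fin n, a ≤ b → f a ∣ f b := by
    intro a b hab
    have h1 : π (f a) ∣ π (f b) :=
      (hπfd a).trans ((hφchain a b hab).trans (hφd b))
    obtain ⟨c, hc⟩ := h1
    obtain ⟨c', rfl⟩ := hπs c
    have h2 : f b - f a * c' ∈ Ideal.span ({m} : Set R) := by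
      rw [← Ideal.Quotient.eq]
      exact hc
    obtain ⟨k, hk⟩ := Ideal.mem_span_singleton'.mp h2
    obtain ⟨μ, hμ⟩ := hfm a
    exact ⟨c' + μ * k, by linear_combination -hk + k * hμ⟩
  -- entrywise construction of an exact identity over R
  have key : ∀ i j : Fin n, ∃ t hl : R, π hl = H i j ∧ f i * t = hl * f j := by
    intro i j
    rcases le_or_gt i j with hij | hij
    · obtain ⟨c, hc⟩ := hfchain i j hij
      obtain ⟨h', hh'⟩ := hπs (H i j)
      exact ⟨h' * c, h', hh', by rw [hc]; ring⟩
    · obtain ⟨ψ, hψ1, -, e, he⟩ := hdiv i j hij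
      -- renormalize with the units
      set ψ' : R ⧸ Ideal.span {m} := ((w i)⁻¹ : (R ⧸ Ideal.span {m})ˣ) * (w j) * ψ with hψ'
      set e' : R ⧸ Ideal.span {m} := (w i) * ((w j)⁻¹ : (R ⧸ Ideal.span {m})ˣ) * e with he'
      have hwi : ((w i)⁻¹ : (R ⧸ Ideal.span {m})ˣ) * (w i : R ⧸ Ideal.span {m}) = 1 :=
        Units.inv_mul _
      have hwj : ((w j)⁻¹ : (R ⧸ Ideal.span {m})ˣ) * (w j : R ⧸ Ideal.span {m}) = 1 :=
        Units.inv_mul _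
      have hψ'1 : π (f i) = π (f j) * ψ' := by
        have h0 : (w i : R ⧸ Ideal.span {m}) * π (f i)
            = (w j : R ⧸ Ideal.span {m}) * π (f j) * ψ := by
          rw [← hw i, ← hw j]; exact hψ1
        rw [hψ']
        linear_combination (((w i)⁻¹ : (R ⧸ Ideal.span {m})ˣ) : R ⧸ Ideal.span {m}) * h0
          - π (f i) * hwi
      have hψe : ψ' * e' = H i j := by
        rw [hψ', he', he]
        linear_combination ψ * e * (((w j)⁻¹ : (R ⧸ Ideal.span {m})ˣ) : R ⧸ Ideal.span {m})
            * ((w j : (R ⧸ Ideal.span {m})ˣ) : R ⧸ Ideal.span {m}) * hwi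
          + ψ * e * hwj
      obtain ⟨P, hP⟩ := hπs ψ'
      obtain ⟨E, hE⟩ := hπs e'
      have h2 : f j * P - f i ∈ Ideal.span ({m} : Set R) := by
        rw [← Ideal.Quotient.eq]
        show π (f j * P) = π (f i)
        rw [map_mul, hP, ← hψ'1]
      obtain ⟨s, hs⟩ := Ideal.mem_span_singleton'.mp h2
      obtain ⟨μ, hμ⟩ := hfm i
      refine ⟨E + E * s * μ, P * E, ?_, ?_⟩
      · rw [map_mul, hP, hE, hψe]
      · linear_combination E * hs - E * s * hμ
  choose T HL hHL hTf using key
  -- the matrix identity over R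
  set TM : Matrix (Fin n) (Fin n) R := Matrix.of T with hTM
  set HLM : Matrix (Fin n) (Fin n) R := Matrix.of HL with hHLM
  have hmat : Matrix.diagonal f * TM = HLM * Matrix.diagonal f := by
    ext i j
    rw [Matrix.diagonal_mul, Matrix.mul_diagonal]
    exact hTf i j
  have hdet : (Matrix.diagonal f).det * TM.det = HLM.det * (Matrix.diagonal f).det := by
    have h := congrArg Matrix.det hmat
    rwa [Matrix.det_mul, Matrix.det_mul] at h
  have hdf : (Matrix.diagonal f).det ≠ 0 := by
    rw [Matrix.det_diagonal]
    exact Finset.prod_ne_zero_iff.mpr (fun i _ => hf0 i)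
  have hdetTH : TM.det = HLM.det := by
    refine mul_left_cancel₀ hdf ?_
    rw [hdet, mul_comm]
  -- push to the quotient
  set S' : Matrix (Fin n) (Fin n) (R ⧸ Ideal.span {m}) := π.mapMatrix TM with hS'
  have hS'app : ∀ i j, S' i j = π (T i j) := fun i j => rfl
  have hHmap : π.mapMatrix HLM = H := by
    ext i j
    exact hHL i j
  have hS'det : S'.det = H.det := by
    rw [hS', ← RingHom.map_det, hdetTH, RingHom.map_det, hHmap]
  have hS'unit : IsUnit S' := by
    rw [Matrix.isUnit_iff_isUnit_det, hS'det]
    exact (Matrix.isUnit_iff_isUnit_det H).mp hH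
  have hrel : ∀ i j, π (f i) * S' i j = H i j * π (f j) := by
    intro i j
    have h := congrArg π (hTf i j)
    rw [map_mul, map_mul, hHL i j] at h
    rw [hS'app i j]
    exact h
  -- conjugate by the diagonal unit matrix
  set u1 : Fin n → R ⧸ Ideal.span {m} := fun i => (((w i)⁻¹ : (R ⧸ Ideal.span {m})ˣ) :
    R ⧸ Ideal.span {m}) with hu1
  set u2 : Fin n → R ⧸ Ideal.span {m} := fun i => ((w i : (R ⧸ Ideal.span {m})ˣ) :
    R ⧸ Ideal.span {m}) with hu2
  have hu12 : ∀ i, u1 i * u2 i = 1 := fun i => Units.inv_mul _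
  set S : Matrix (Fin n) (Fin n) (R ⧸ Ideal.span {m}) :=
    Matrix.diagonal u1 * S' * Matrix.diagonal u2 with hS
  have hDD : Matrix.diagonal u1 * Matrix.diagonal u2 = 1 := by
    rw [Matrix.diagonal_mul_diagonal]
    have h12 : (fun i => u1 i * u2 i) = fun _ => (1 : R ⧸ Ideal.span {m}) := funext hu12
    rw [h12, Matrix.diagonal_one]
  have hDD' : Matrix.diagonal u2 * Matrix.diagonal u1 = 1 := by
    rw [Matrix.diagonal_mul_diagonal]
    have h21 : (fun i => u2 i * u1 i) = fun _ => (1 : R ⧸ Ideal.span {m}) := by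
      funext i; rw [mul_comm]; exact hu12 i
    rw [h21, Matrix.diagonal_one]
  have hD1 : IsUnit (Matrix.diagonal u1) := isUnit_iff_exists.mpr ⟨Matrix.diagonal u2, hDD, hDD'⟩
  have hD2 : IsUnit (Matrix.diagonal u2) := isUnit_iff_exists.mpr ⟨Matrix.diagonal u1, hDD', hDD⟩
  refine ⟨S, (hD1.mul hS'unit).mul hD2, ?_⟩
  ext i j
  have hSapp : S i j = u1 i * S' i j * u2 j := by
    rw [hS, Matrix.mul_diagonal, Matrix.diagonal_mul]
  rw [Matrix.mul_diagonal, Matrix.diagonal_mul, hSapp]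
  have hfi : φ i = u2 i * π (f i) := hw i
  have hfj : φ j = u2 j * π (f j) := hw j
  rw [hfi, hfj]
  linear_combination (-(u2 j)) * hrel i j - u2 j * π (f i) * S' i j * hu12 i
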